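/- In the rational quaternion algebra B = (6, -3)/ℚ with generators i, j satisfying i² = 6, j² = -3, ji = -ij, and k = ij, the ℤ-lattice O = ℤ·1 + ℤ·(i/2 + k/6) + ℤ·(1/2 + j/2) + ℤ·(k/3) is a subring of B (closed under multiplication and containing 1). -/

import Mathlib

open scoped Quaternion

/-- The ℤ-lattice O = ℤ·1 + ℤ·(i/2 + k/6) + ℤ·(1/2 + j/2) + ℤ·(k/3) in the
quaternion algebra (6,-3)/ℚ. -/
def quatOrder63 : Set ℍ[ℚ, 6, -3] :=
  {x | ∃ a b c d : ℤ,
    x = (a : ℚ) • (1 : ℍ[ℚ, 6, -3])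
      + (b : ℚ) • (⟨0, 1/2, 0, 1/6⟩ : ℍ[ℚ, 6, -3])
      + (c : ℚ) • (⟨1/2, 0, 1/2, 0⟩ : ℍ[ℚ, 6, -3])
      + (d : ℚ) • (⟨0, 0, 0, 1/3⟩ : ℍ[ℚ, 6, -3])}

/-- O is a subring of (6,-3)/ℚ: it contains 1 and is closed under
multiplication. -/
theorem quatOrder63_one_mem_and_mul_closed :
    (1 : ℍ[ℚ, 6, -3]) ∈ quatOrder63 ∧
    ∀ x ∈ quatOrder63, ∀ y ∈ quatOrder63, x * y ∈ quatOrder63 := by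
  constructor
  · exact ⟨1, 0, 0, 0, by ext <;> simp⟩
  · rintro x ⟨a, b, c, d, rfl⟩ y ⟨e, f, g, h, rfl⟩
    refine ⟨a*e + 2*b*f - c*g + 2*d*f + 2*d*h,
            a*f + b*e + c*f + c*h - d*g,
            a*g + 2*b*h + c*e + c*g - 2*d*f,
            a*h + b*g - c*f + d*e + d*g, ?_⟩
    ext <;> simp [QuaternionAlgebra.re_mul, QuaternionAlgebra.imI_mul,
      QuaternionAlgebra.imJ_mul, QuaternionAlgebra.imK_mul] <;> push_cast <;> ring
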